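/- arXiv:1606.06958 — 3 statements merged into one kernel-verified Lean document; each statement's English description precedes it below -/
import Mathlib

section
/- Let W be a bipartite graphon on an atomless probability space Ω. Then every extreme point of the fractional vertex cover polyton C(W) takes values in {0,1} almost everywhere. -/
open MeasureTheory Set

/-- A graphon: symmetric measurable `[0,1]`-valued kernel. -/
def IsGraphon {Ω : Type*} [MeasurableSpace Ω] (W : Ω → Ω → ℝ) : Prop :=
  Measurable (Function.uncurry W) ∧ (∀ x y, W x y = W y x) ∧ ∀ x y, W x y ∈ Set.Icc (0:ℝ) 1

/-- A graphon is bipartite if `Ω` splits into two positive-measure parts with `W = 0`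
a.e. on both diagonal blocks. -/
def IsBipartite {Ω : Type*} [MeasurableSpace Ω] (ν : Measure Ω) (W : Ω → Ω → ℝ) : Prop :=
  ∃ A : Set Ω, MeasurableSet A ∧ 0 < ν A ∧ 0 < ν Aᶜ ∧
    ∀ᵐ p ∂(ν.prod ν), ((p.1 ∈ A ∧ p.2 ∈ A) ∨ (p.1 ∉ A ∧ p.2 ∉ A)) → W p.1 p.2 = 0

/-- A fractional vertex cover of a graphon `W`. -/
def IsFracCover {Ω : Type*} [MeasurableSpace Ω] (ν : Measure Ω) (W : Ω → Ω → ℝ)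
    (c : Ω → ℝ) : Prop :=
  Measurable c ∧ (∀ x, c x ∈ Set.Icc (0:ℝ) 1) ∧
    ∀ᵐ p ∂(ν.prod ν), 0 < W p.1 p.2 → 1 ≤ c p.1 + c p.2

/-- `c` is an extreme point of the fractional vertex cover polyton `C(W)`
(equality of functions taken almost everywhere). -/
def IsExtremeCover {Ω : Type*} [MeasurableSpace Ω] (ν : Measure Ω) (W : Ω → Ω → ℝ)
    (c : Ω → ℝ) : Prop :=
  IsFracCover ν W c ∧ ∀ c' c'' : Ω → ℝ, IsFracCover ν W c' → IsFracCover ν W c'' →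
    (c =ᵐ[ν] fun x => (c' x + c'' x) / 2) → c' =ᵐ[ν] c ∧ c'' =ᵐ[ν] c

theorem stmt_3 {Ω : Type*} [MeasurableSpace Ω] (ν : Measure Ω) [IsProbabilityMeasure ν]
    [NullSingletonClass ν] (W : Ω → Ω → ℝ) (hW : IsGraphon W) (hbip : IsBipartite ν W)
    (c : Ω → ℝ) (hc : IsExtremeCover ν W c) :
    ∀ᵐ x ∂ν, c x = 0 ∨ c x = 1 := by
  classical
  obtain ⟨⟨hcm, hc01, hcov⟩, hext⟩ := hc
  obtain ⟨A, hA, hA0, hAc0, hbipae⟩ := hbip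
  set m : Ω → ℝ := fun x => min (c x) (1 - c x) with hm
  set t : Ω → ℝ := fun x => if x ∈ A then m x else - m x with ht
  have hmm : Measurable m := hcm.min (measurable_const.sub hcm)
  have htm : Measurable t := Measurable.ite hA hmm hmm.neg
  have hm0 : ∀ x, 0 ≤ m x := fun x => le_min (hc01 x).1 (by linarith [(hc01 x).2])
  have key : ∀ a b : ℝ, a ∈ Set.Icc (0:ℝ) 1 → b ∈ Set.Icc (0:ℝ) 1 → 1 ≤ a + b →
      1 ≤ (a + min a (1-a)) + (b - min b (1-b)) := by
    rintro a b ⟨ha0, ha1⟩ ⟨hb0, hb1⟩ hab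
    rcases min_cases a (1-a) with ⟨h,_⟩|⟨h,_⟩ <;>
      rcases min_cases b (1-b) with ⟨h2,_⟩|⟨h2,_⟩ <;> linarith
  have hcov' : ∀ᵐ p ∂(ν.prod ν), 0 < W p.1 p.2 →
      (1 ≤ (c p.1 + t p.1) + (c p.2 + t p.2)) ∧
      (1 ≤ (c p.1 - t p.1) + (c p.2 - t p.2)) := by
    filter_upwards [hcov, hbipae] with p hcp hbp hWp
    have hs := hcp hWp
    by_cases h1 : p.1 ∈ A <;> by_cases h2 : p.2 ∈ A
    · exact absurd (hbp (Or.inl ⟨h1, h2⟩)) (by linarith)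
    · have e1 : t p.1 = m p.1 := if_pos h1
      have e2 : t p.2 = - m p.2 := if_neg h2
      constructor
      · have := key (c p.1) (c p.2) (hc01 _) (hc01 _) hs
        rw [e1, e2]; simp only [hm] at this ⊢; linarith
      · have := key (c p.2) (c p.1) (hc01 _) (hc01 _) (by linarith)
        rw [e1, e2]; simp only [hm] at this ⊢; linarith
    · have e1 : t p.1 = - m p.1 := if_neg h1
      have e2 : t p.2 = m p.2 := if_pos h2
      constructor
      · have := key (c p.2) (c p.1) (hc01 _) (hc01 _) (by linarith)
        rw [e1, e2]; simp only [hm] at this ⊢; linarith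
      · have := key (c p.1) (c p.2) (hc01 _) (hc01 _) hs
        rw [e1, e2]; simp only [hm] at this ⊢; linarith
    · exact absurd (hbp (Or.inr ⟨h1, h2⟩)) (by linarith)
  have hrange : ∀ x, (c x + t x ∈ Set.Icc (0:ℝ) 1) ∧ (c x - t x ∈ Set.Icc (0:ℝ) 1) := by
    intro x
    obtain ⟨h0, h1⟩ := hc01 x
    have hml : m x ≤ c x := min_le_left _ _
    have hmr : m x ≤ 1 - c x := min_le_right _ _
    have := hm0 x
    by_cases hx : x ∈ A
    · rw [ht]; simp only [if_pos hx]
      exact ⟨⟨by linarith, by linarith⟩, ⟨by linarith, by linarith⟩⟩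
    · rw [ht]; simp only [if_neg hx]
      exact ⟨⟨by linarith, by linarith⟩, ⟨by linarith, by linarith⟩⟩
  have hc'F : IsFracCover ν W (fun x => c x + t x) :=
    ⟨hcm.add htm, fun x => (hrange x).1, by
      filter_upwards [hcov'] with p hp hWp; exact (hp hWp).1⟩
  have hc''F : IsFracCover ν W (fun x => c x - t x) :=
    ⟨hcm.sub htm, fun x => (hrange x).2, by
      filter_upwards [hcov'] with p hp hWp; exact (hp hWp).2⟩
  obtain ⟨heq, -⟩ := hext _ _ hc'F hc''F (by
    filter_upwards with x
    ring)
  filter_upwards [heq] with x hx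
  have htx : t x = 0 := by simpa using sub_eq_zero.mpr hx
  have hmx : m x = 0 := by
    by_cases hxA : x ∈ A
    · rw [ht] at htx; simpa [if_pos hxA] using htx
    · rw [ht] at htx; simp only [if_neg hxA, neg_eq_zero] at htx; exact htx
  have hmx' : min (c x) (1 - c x) = 0 := hmx
  rcases min_cases (c x) (1 - c x) with ⟨h, -⟩ | ⟨h, -⟩
  · left; linarith [h.symm.trans hmx']
  · right; linarith [h.symm.trans hmx']
end

section
/- Let W be a graphon on an atomless probability space Ω. Then every extreme point of the fractional vertex cover polyton C(W) takes values in {0, 1/2, 1} almost everywhere. -/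
open MeasureTheory Set

/-- Perturbation: distance of `t` to the nearest of `{0, 1/2, 1}`, signed towards `1/2`. -/
noncomputable def pert (t : ℝ) : ℝ :=
  if t < 1/2 then min t (1/2 - t) else -(min (t - 1/2) (1 - t))

lemma pert_measurable : Measurable pert := by
  unfold pert
  exact Measurable.ite (measurableSet_lt measurable_id measurable_const)
    (measurable_id.min (measurable_const.sub measurable_id))
    ((measurable_id.sub measurable_const).min (measurable_const.sub measurable_id)).neg

lemma pert_range {t : ℝ} (ht : t ∈ Set.Icc (0:ℝ) 1) :
    t + pert t ∈ Set.Icc (0:ℝ) 1 ∧ t - pert t ∈ Set.Icc (0:ℝ) 1 := by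
  obtain ⟨h0, h1⟩ := ht
  unfold pert
  split_ifs with h <;>
    rcases min_cases t (1/2 - t) with ⟨he, hle⟩ | ⟨he, hle⟩ <;>
    rcases min_cases (t - 1/2) (1 - t) with ⟨he', hle'⟩ | ⟨he', hle'⟩ <;>
    constructor <;> constructor <;> simp only [he, he'] <;> linarith

lemma pert_key {a b : ℝ} (ha : a ∈ Set.Icc (0:ℝ) 1) (hb : b ∈ Set.Icc (0:ℝ) 1)
    (hab : 1 ≤ a + b) :
    1 ≤ (a + pert a) + (b + pert b) ∧ 1 ≤ (a - pert a) + (b - pert b) := by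
  obtain ⟨ha0, ha1⟩ := ha
  obtain ⟨hb0, hb1⟩ := hb
  unfold pert
  split_ifs with h1 h2 h2
  · exact absurd hab (by linarith)
  · rcases min_cases a (1/2 - a) with ⟨hea, hlea⟩ | ⟨hea, hlea⟩ <;>
      rcases min_cases (b - 1/2) (1 - b) with ⟨heb, hleb⟩ | ⟨heb, hleb⟩ <;>
      constructor <;> simp only [hea, heb] <;> linarith
  · rcases min_cases (a - 1/2) (1 - a) with ⟨hea, hlea⟩ | ⟨hea, hlea⟩ <;>
      rcases min_cases b (1/2 - b) with ⟨heb, hleb⟩ | ⟨heb, hleb⟩ <;>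
      constructor <;> simp only [hea, heb] <;> linarith
  · rcases min_cases (a - 1/2) (1 - a) with ⟨hea, hlea⟩ | ⟨hea, hlea⟩ <;>
      rcases min_cases (b - 1/2) (1 - b) with ⟨heb, hleb⟩ | ⟨heb, hleb⟩ <;>
      constructor <;> simp only [hea, heb] <;> linarith

lemma pert_eq_zero {t : ℝ} (ht : t ∈ Set.Icc (0:ℝ) 1) (h : pert t = 0) :
    t = 0 ∨ t = 1/2 ∨ t = 1 := by
  obtain ⟨h0, h1⟩ := ht
  unfold pert at h
  split_ifs at h with hlt
  · rcases min_cases t (1/2 - t) with ⟨he, hle⟩ | ⟨he, hle⟩ <;> rw [he] at h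
    · left; exact h
    · right; left; linarith
  · rcases min_cases (t - 1/2) (1 - t) with ⟨he, hle⟩ | ⟨he, hle⟩ <;> rw [he] at h
    · right; left; linarith
    · right; right; linarith

theorem stmt_4 {Ω : Type*} [MeasurableSpace Ω] (ν : Measure Ω) [IsProbabilityMeasure ν]
    [NullSingletonClass ν] (W : Ω → Ω → ℝ) (hW : IsGraphon W)
    (c : Ω → ℝ) (hc : IsExtremeCover ν W c) :
    ∀ᵐ x ∂ν, c x = 0 ∨ c x = 1/2 ∨ c x = 1 := by
  obtain ⟨⟨hmc, hrange, hcov⟩, hext⟩ := hc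
  set c' : Ω → ℝ := fun x => c x + pert (c x) with hc'def
  set c'' : Ω → ℝ := fun x => c x - pert (c x) with hc''def
  have hc' : IsFracCover ν W c' := by
    refine ⟨hmc.add (pert_measurable.comp hmc), fun x => (pert_range (hrange x)).1, ?_⟩
    filter_upwards [hcov] with p hp hWp
    exact (pert_key (hrange p.1) (hrange p.2) (hp hWp)).1
  have hc'' : IsFracCover ν W c'' := by
    refine ⟨hmc.sub (pert_measurable.comp hmc), fun x => (pert_range (hrange x)).2, ?_⟩
    filter_upwards [hcov] with p hp hWp
    exact (pert_key (hrange p.1) (hrange p.2) (hp hWp)).2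
  have hmid : c =ᵐ[ν] fun x => (c' x + c'' x) / 2 := by
    apply Filter.Eventually.of_forall
    intro x
    simp only [hc'def, hc''def]
    ring
  obtain ⟨h1, _⟩ := hext c' c'' hc' hc'' hmid
  filter_upwards [h1] with x hx
  have : pert (c x) = 0 := by
    simp only [hc'def] at hx
    linarith
  exact pert_eq_zero (hrange x) this
end

section
/- Let W:Ω²→[0,1] be a graphon and let (A_n) be a sequence of measurable subsets of Ω with ∫_{A_n×A_n} W → 0 as n → ∞. Suppose the indicator functions 1_{A_n} converge weak* in L^∞(Ω) to a function f:Ω→[0,1]. Then supp f is an independent set in W, i.e. for every δ>0 the set P = {x : f(x) > δ} satisfies ∫_{P×P} W = 0. -/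
open MeasureTheory Set Filter Topology

private lemma integrable_of_bdd1 {Ω : Type*} [MeasurableSpace Ω] {ν : Measure Ω}
    [IsFiniteMeasure ν] {g : Ω → ℝ} (hg : AEStronglyMeasurable g ν)
    (h : ∀ x, |g x| ≤ 1) : Integrable g ν :=
  Integrable.mono' (integrable_const 1) hg (ae_of_all _ fun x => by
    simpa [Real.norm_eq_abs] using h x)

theorem stmt_17 {Ω : Type*} [MeasurableSpace Ω] (ν : Measure Ω) [IsProbabilityMeasure ν]
    (W : Ω → Ω → ℝ) (hW : IsGraphon W)
    (A : ℕ → Set Ω) (hA : ∀ n, MeasurableSet (A n))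
    (hsmall : Tendsto (fun n => ∫ p in A n ×ˢ A n, W p.1 p.2 ∂(ν.prod ν)) atTop (𝓝 0))
    (f : Ω → ℝ) (hfmeas : Measurable f) (hf01 : ∀ x, f x ∈ Set.Icc (0:ℝ) 1)
    (hweak : ∀ g : Ω → ℝ, Integrable g ν →
      Tendsto (fun n => ∫ x in A n, g x ∂ν) atTop (𝓝 (∫ x, f x * g x ∂ν))) :
    ∀ δ : ℝ, 0 < δ →
      (∫ p in {x | δ < f x} ×ˢ {x | δ < f x}, W p.1 p.2 ∂(ν.prod ν)) = 0 := by
  obtain ⟨hWm, hWsymm, hW01⟩ := hW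
  intro δ hδ
  set P : Set Ω := {x | δ < f x} with hPdef
  have hPm : MeasurableSet P := measurableSet_lt measurable_const hfmeas
  have hWnn : ∀ x y, 0 ≤ W x y := fun x y => (hW01 x y).1
  have hWle : ∀ x y, W x y ≤ 1 := fun x y => (hW01 x y).2
  -- measurability of slices
  have hWslice : ∀ x, Measurable fun y => W x y := fun x =>
    hWm.comp (measurable_const.prodMk measurable_id)
  have hWsliceInt : ∀ x, Integrable (fun y => W x y) ν := fun x =>
    integrable_of_bdd1 (hWslice x).aestronglyMeasurable
      (fun y => abs_le.2 ⟨by linarith [hWnn x y], hWle x y⟩)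
  -- F x = ∫ y, f y * W x y
  set F : Ω → ℝ := fun x => ∫ y, f y * W x y ∂ν with hFdef
  have hfWm : Measurable fun p : Ω × Ω => f p.2 * W p.1 p.2 :=
    (hfmeas.comp measurable_snd).mul hWm
  have hFsm : StronglyMeasurable F := by
    exact hfWm.stronglyMeasurable.integral_prod_right'
  have hfWint : ∀ x, Integrable (fun y => f y * W x y) ν := fun x =>
    integrable_of_bdd1 ((hfmeas.mul (hWslice x)).aestronglyMeasurable)
      (fun y => by
        have h1 := (hf01 y).1; have h2 := (hf01 y).2
        have := hWnn x y; have := hWle x y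
        rw [abs_of_nonneg (by positivity)]
        nlinarith)
  have hFnn : ∀ x, 0 ≤ F x := fun x =>
    integral_nonneg fun y => mul_nonneg (hf01 y).1 (hWnn x y)
  have hFle : ∀ x, F x ≤ 1 := fun x => by
    calc F x ≤ ∫ _, (1:ℝ) ∂ν := by
          refine integral_mono (hfWint x) (integrable_const 1) fun y => ?_
          have h1 := (hf01 y).1; have h2 := (hf01 y).2
          have := hWnn x y; have := hWle x y
          nlinarith
      _ = 1 := by simp
  have hFint : Integrable F ν :=
    integrable_of_bdd1 hFsm.aestronglyMeasurable
      (fun x => abs_le.2 ⟨by linarith [hFnn x], hFle x⟩)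
  -- d n x = ∫ y in A n, W x y
  set d : ℕ → Ω → ℝ := fun n x => ∫ y in A n, W x y ∂ν with hddef
  have hdnn : ∀ n x, 0 ≤ d n x := fun n x =>
    setIntegral_nonneg (hA n) fun y _ => hWnn x y
  have hdle : ∀ n x, d n x ≤ 1 := fun n x => by
    calc d n x ≤ ∫ y in A n, (1:ℝ) ∂ν := by
          refine setIntegral_mono ((hWsliceInt x).integrableOn) (integrable_const 1).integrableOn
            fun y => hWle x y
      _ ≤ 1 := by
          simp only [setIntegral_const, smul_eq_mul, mul_one]
          simpa using ENNReal.toReal_mono ENNReal.one_ne_top (prob_le_one (μ := ν) (s := A n))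
  have hdsm : ∀ n, StronglyMeasurable (d n) := by
    intro n
    have hm : Measurable fun p : Ω × Ω => (A n).indicator (fun _ => (1:ℝ)) p.2 * W p.1 p.2 :=
      ((measurable_one.indicator (hA n)).comp measurable_snd).mul hWm
    have : StronglyMeasurable fun x => ∫ y, (A n).indicator (fun _ => (1:ℝ)) y * W x y ∂ν :=
      hm.stronglyMeasurable.integral_prod_right'
    convert this using 1
    funext x
    rw [hddef]
    simp only
    rw [← integral_indicator (hA n)]
    congr 1
    funext y
    by_cases hy : y ∈ A n <;> simp [Set.indicator, hy]
  have hdtend : ∀ x, Tendsto (fun n => d n x) atTop (𝓝 (F x)) := fun x =>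
    hweak (fun y => W x y) (hWsliceInt x)
  -- L¹ convergence of d n to F
  have hdiffm : ∀ n, AEStronglyMeasurable (fun x => |d n x - F x|) ν := fun n =>
    (((hdsm n).sub hFsm).norm.aestronglyMeasurable).congr
      (ae_of_all _ fun x => by simp [Real.norm_eq_abs])
  have hL1 : Tendsto (fun n => ∫ x, |d n x - F x| ∂ν) atTop (𝓝 0) := by
    have h0 : (0:ℝ) = ∫ _, (0:ℝ) ∂ν := by simp
    rw [h0]
    refine tendsto_integral_of_dominated_convergence (fun _ => (2:ℝ)) hdiffm
      (integrable_const 2) (fun n => ae_of_all _ fun x => ?_)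
      (ae_of_all _ fun x => ?_)
    · have := hdnn n x; have := hdle n x; have := hFnn x; have := hFle x
      have hb : |d n x - F x| ≤ 2 := by rw [abs_le]; constructor <;> linarith
      simpa [Real.norm_eq_abs, abs_abs] using hb
    · have : Tendsto (fun n => d n x - F x) atTop (𝓝 (F x - F x)) :=
        (hdtend x).sub tendsto_const_nhds
      rw [sub_self] at this
      simpa using this.abs
  -- T n = ∫ in A n, d n
  have hWintProd : Integrable (fun p : Ω × Ω => W p.1 p.2) (ν.prod ν) :=
    integrable_of_bdd1 hWm.aestronglyMeasurable
      (fun p => abs_le.2 ⟨by linarith [hWnn p.1 p.2], hWle p.1 p.2⟩)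
  have hT : ∀ n, (∫ p in A n ×ˢ A n, W p.1 p.2 ∂(ν.prod ν)) = ∫ x in A n, d n x ∂ν := by
    intro n
    rw [setIntegral_prod _ hWintProd.integrableOn]
  -- ∫ in A n, F → 0
  have hdint : ∀ n, Integrable (d n) ν := fun n =>
    integrable_of_bdd1 (hdsm n).aestronglyMeasurable
      (fun x => abs_le.2 ⟨by linarith [hdnn n x], hdle n x⟩)
  have hclose : ∀ n, |(∫ x in A n, d n x ∂ν) - ∫ x in A n, F x ∂ν| ≤ ∫ x, |d n x - F x| ∂ν := by
    intro n
    rw [← integral_sub (hdint n).integrableOn hFint.integrableOn]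
    calc |∫ x in A n, (d n x - F x) ∂ν| ≤ ∫ x in A n, |d n x - F x| ∂ν := by
          simpa [Real.norm_eq_abs] using
            norm_integral_le_integral_norm (μ := ν.restrict (A n)) (fun x => d n x - F x)
      _ ≤ ∫ x, |d n x - F x| ∂ν := by
          refine setIntegral_le_integral ?_ (ae_of_all _ fun x => abs_nonneg _)
          exact integrable_of_bdd1 (hdiffm n) (fun x => by
            have := hdnn n x; have := hdle n x; have := hFnn x; have := hFle x
            rw [abs_abs, abs_le]; constructor <;> linarith)
  have hAF : Tendsto (fun n => ∫ x in A n, F x ∂ν) atTop (𝓝 0) := by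
    have hdiff : Tendsto (fun n => (∫ x in A n, d n x ∂ν) - ∫ x in A n, F x ∂ν) atTop (𝓝 0) :=
      squeeze_zero_norm (fun n => by simpa [Real.norm_eq_abs] using hclose n) hL1
    have := (Tendsto.sub (hsmall.congr (fun n => hT n)) hdiff)
    simpa using this
  have hfF0 : (∫ x, f x * F x ∂ν) = 0 :=
    tendsto_nhds_unique (hweak F hFint) hAF
  -- lower bound: δ^2 * ∫_{P×P} W ≤ ∫ f F
  set I : ℝ := ∫ p in P ×ˢ P, W p.1 p.2 ∂(ν.prod ν) with hIdef
  have hIval : I = ∫ x in P, ∫ y in P, W x y ∂ν ∂ν :=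
    setIntegral_prod _ hWintProd.integrableOn
  have hInn : 0 ≤ I :=
    setIntegral_nonneg (hPm.prod hPm) fun p _ => hWnn p.1 p.2
  have key : δ * δ * I ≤ ∫ x, f x * F x ∂ν := by
    have hfFint : Integrable (fun x => f x * F x) ν :=
      integrable_of_bdd1 (hfmeas.aestronglyMeasurable.mul hFsm.aestronglyMeasurable)
        (fun x => by
          have h1 := (hf01 x).1; have h2 := (hf01 x).2
          have := hFnn x; have := hFle x
          rw [abs_of_nonneg (by positivity)]; nlinarith)
    have step1 : (∫ x in P, f x * F x ∂ν) ≤ ∫ x, f x * F x ∂ν :=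
      setIntegral_le_integral hfFint
        (ae_of_all _ fun x => mul_nonneg (hf01 x).1 (hFnn x))
    have step2 : (∫ x in P, δ * F x ∂ν) ≤ ∫ x in P, f x * F x ∂ν := by
      refine setIntegral_mono_on ((hFint.const_mul δ).integrableOn)
        hfFint.integrableOn hPm fun x hx => ?_
      exact mul_le_mul_of_nonneg_right (le_of_lt hx) (hFnn x)
    -- F x ≥ δ * ∫ y in P, W x y
    have hFlower : ∀ x, δ * ∫ y in P, W x y ∂ν ≤ F x := by
      intro x
      have e1 : (∫ y in P, δ * W x y ∂ν) ≤ ∫ y in P, f y * W x y ∂ν := by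
        refine setIntegral_mono_on (((hWsliceInt x).const_mul δ).integrableOn)
          (hfWint x).integrableOn hPm fun y hy => ?_
        exact mul_le_mul_of_nonneg_right (le_of_lt hy) (hWnn x y)
      have e2 : (∫ y in P, f y * W x y ∂ν) ≤ F x :=
        setIntegral_le_integral (hfWint x)
          (ae_of_all _ fun y => mul_nonneg (hf01 y).1 (hWnn x y))
      calc δ * ∫ y in P, W x y ∂ν = ∫ y in P, δ * W x y ∂ν := by
            rw [integral_const_mul]
        _ ≤ F x := e1.trans e2
    have step3 : δ * ∫ x in P, ∫ y in P, W x y ∂ν ∂ν ≤ ∫ x in P, F x ∂ν := by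
      rw [← integral_const_mul]
      refine setIntegral_mono_on ?_ hFint.integrableOn hPm fun x _ => hFlower x
      -- integrability of x ↦ δ * ∫ y in P, W x y on P
      have hesm : StronglyMeasurable fun x => ∫ y in P, W x y ∂ν := by
        have hm : Measurable fun p : Ω × Ω => P.indicator (fun _ => (1:ℝ)) p.2 * W p.1 p.2 :=
          ((measurable_one.indicator hPm).comp measurable_snd).mul hWm
        have : StronglyMeasurable fun x => ∫ y, P.indicator (fun _ => (1:ℝ)) y * W x y ∂ν :=
          hm.stronglyMeasurable.integral_prod_right'
        convert this using 1
        funext x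
        rw [← integral_indicator hPm]
        congr 1
        funext y
        by_cases hy : y ∈ P <;> simp [Set.indicator, hy]
      have henn : ∀ x, 0 ≤ ∫ y in P, W x y ∂ν := fun x =>
        setIntegral_nonneg hPm fun y _ => hWnn x y
      have hele : ∀ x, (∫ y in P, W x y ∂ν) ≤ 1 := fun x => by
        calc (∫ y in P, W x y ∂ν) ≤ ∫ y in P, (1:ℝ) ∂ν :=
              setIntegral_mono ((hWsliceInt x).integrableOn)
                (integrable_const 1).integrableOn fun y => hWle x y
          _ ≤ 1 := by
              simp only [setIntegral_const, smul_eq_mul, mul_one]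
              simpa using ENNReal.toReal_mono ENNReal.one_ne_top (prob_le_one (μ := ν) (s := P))
      exact ((integrable_of_bdd1 hesm.aestronglyMeasurable
        (fun x => abs_le.2 ⟨by linarith [henn x], hele x⟩)).const_mul δ).integrableOn
    calc δ * δ * I = δ * (δ * ∫ x in P, ∫ y in P, W x y ∂ν ∂ν) := by rw [hIval]; ring
      _ ≤ δ * ∫ x in P, F x ∂ν := by
          exact mul_le_mul_of_nonneg_left step3 (le_of_lt hδ)
      _ = ∫ x in P, δ * F x ∂ν := by rw [integral_const_mul]
      _ ≤ ∫ x, f x * F x ∂ν := step2.trans step1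
  rw [hfF0] at key
  have : I ≤ 0 := by
    have h2 : δ * δ * I ≤ δ * δ * 0 := by linarith
    exact le_of_mul_le_mul_left h2 (mul_pos hδ hδ)
  exact le_antisymm this hInn
end
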